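/- Let s : Fin p → Fin p → ℝ be a similarity matrix, λ ∈ ℝ, and let s_λ be the shifted similarity with s_λ(i,i) = s(i,i) + λ and s_λ(i,j) = s(i,j) for i ≠ j. For any two pairs of disjoint nonempty finite subsets (C₁, C₁') and (C₂, C₂') of Fin p, one has δ_{s_λ}(C₁,C₁') ≤ δ_{s_λ}(C₂,C₂') if and only if δ_s(C₁,C₁') ≤ δ_s(C₂,C₂'); in particular the minimizing candidate fusion at every step of adjacency-constrained Ward HAC is the same for s and s_λ. -/

import Mathlib

open Finset

/-- The similarity sum `S_s(C) = ∑_{(i,j)∈C×C} s(i,j)`. -/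
def simSum {p : ℕ} (s : Fin p → Fin p → ℝ) (C : Finset (Fin p)) : ℝ :=
  ∑ i ∈ C, ∑ j ∈ C, s i j

/-- The Ward linkage associated with the similarity `s`:
`δ_s(C,C') = S_s(C)/|C| + S_s(C')/|C'| − S_s(C ∪ C')/(|C|+|C'|)`. -/
noncomputable def wardS {p : ℕ} (s : Fin p → Fin p → ℝ) (C C' : Finset (Fin p)) : ℝ :=
  simSum s C / C.card + simSum s C' / C'.card
    - simSum s (C ∪ C') / (C.card + C'.card)

/-- The shifted similarity `s_λ`, with `s_λ(i,i) = s(i,i) + λ` and `s_λ(i,j) = s(i,j)` for `i ≠ j`. -/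
def shiftSim {p : ℕ} (s : Fin p → Fin p → ℝ) (lam : ℝ) : Fin p → Fin p → ℝ :=
  fun i j => if i = j then s i j + lam else s i j

lemma simSum_shift {p : ℕ} (s : Fin p → Fin p → ℝ) (lam : ℝ) (C : Finset (Fin p)) :
    simSum (shiftSim s lam) C = simSum s C + lam * C.card := by
  unfold simSum shiftSim
  have : ∀ i ∈ C, ∑ j ∈ C, (if i = j then s i j + lam else s i j)
      = (∑ j ∈ C, s i j) + lam := by
    intro i hi
    have : ∑ j ∈ C, (if i = j then s i j + lam else s i j)
        = ∑ j ∈ C, (s i j + if i = j then lam else 0) := by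
      apply Finset.sum_congr rfl
      intro j _; split <;> simp
    rw [this, Finset.sum_add_distrib, Finset.sum_ite_eq C i (fun _ => lam), if_pos hi]
  rw [Finset.sum_congr rfl this, Finset.sum_add_distrib, Finset.sum_const, nsmul_eq_mul,
    mul_comm]

lemma wardS_shift {p : ℕ} (s : Fin p → Fin p → ℝ) (lam : ℝ) (C C' : Finset (Fin p))
    (hC : C.Nonempty) (hC' : C'.Nonempty) (hdisj : Disjoint C C') :
    wardS (shiftSim s lam) C C' = wardS s C C' + lam := by
  have h1 : (C.card : ℝ) ≠ 0 := by exact_mod_cast Finset.card_ne_zero_of_mem hC.choose_spec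
  have h2 : (C'.card : ℝ) ≠ 0 := by exact_mod_cast Finset.card_ne_zero_of_mem hC'.choose_spec
  have h3 : (C.card : ℝ) + C'.card ≠ 0 := by positivity
  have hcard : ((C ∪ C').card : ℝ) = C.card + C'.card := by
    rw [Finset.card_union_of_disjoint hdisj]; push_cast; ring
  unfold wardS
  rw [simSum_shift, simSum_shift, simSum_shift, hcard]
  field_simp
  ring

/-- Order of Ward linkages is preserved by the diagonal shift: for any two pairs of disjoint
nonempty clusters, `δ_{s_λ}(C₁,C₁') ≤ δ_{s_λ}(C₂,C₂') ↔ δ_s(C₁,C₁') ≤ δ_s(C₂,C₂')`; hence the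
minimizing candidate fusion at each step of adjacency-constrained Ward HAC is the same for
`s` and `s_λ`. -/
theorem wardS_shiftSim_le_iff {p : ℕ} (s : Fin p → Fin p → ℝ) (lam : ℝ)
    (C₁ C₁' C₂ C₂' : Finset (Fin p))
    (hC₁ : C₁.Nonempty) (hC₁' : C₁'.Nonempty) (hdisj₁ : Disjoint C₁ C₁')
    (hC₂ : C₂.Nonempty) (hC₂' : C₂'.Nonempty) (hdisj₂ : Disjoint C₂ C₂') :
    wardS (shiftSim s lam) C₁ C₁' ≤ wardS (shiftSim s lam) C₂ C₂' ↔
      wardS s C₁ C₁' ≤ wardS s C₂ C₂' := by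
  rw [wardS_shift s lam C₁ C₁' hC₁ hC₁' hdisj₁, wardS_shift s lam C₂ C₂' hC₂ hC₂' hdisj₂,
    add_le_add_iff_right]
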